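/- With K, 𝒫, E as above, the space E = C(K,{0,1}) with the topology of uniform convergence on members of 𝒫 is a P-space: every Gδ-set in E is open. -/
import Mathlib


/-- A set `L` is a P-set if every Gδ-set containing `L` is a neighbourhood of `L`. -/
def IsPSet {Y : Type*} [TopologicalSpace Y] (L : Set Y) : Prop :=
  ∀ G : Set Y, IsGδ G → L ⊆ G → L ⊆ interior G

/-- The topology on `E = C(K, Bool)` of uniform convergence on members of the
cover `P`: basic (sub-basic) open sets are `N(f, L) = { g : g|_L = f|_L }`. -/
def coverTopology {K : Type*} [TopologicalSpace K] (P : Set (Set K)) :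
    TopologicalSpace C(K, Bool) :=
  TopologicalSpace.generateFrom
    {S | ∃ f : C(K, Bool), ∃ L ∈ P, S = {g : C(K, Bool) | ∀ x ∈ L, g x = f x}}

theorem function_space_is_P_space
    {K : Type*} [TopologicalSpace K] [CompactSpace K] [T2Space K]
    [ExtremallyDisconnected K]
    (P : Set (Set K))
    (hclosed : ∀ L ∈ P, IsClosed L)
    (hnd : ∀ L ∈ P, interior (closure L) = ∅)
    (hpset : ∀ L ∈ P, IsPSet L)
    (hcover : ⋃₀ P = Set.univ)
    (hctble : ∀ Q ⊆ P, Q.Countable → ∃ L ∈ P, ⋃₀ Q ⊆ L) :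
    ∀ G : Set C(K, Bool), @IsGδ C(K, Bool) (coverTopology P) G → @IsOpen C(K, Bool) (coverTopology P) G := by
  classical
  letI : TopologicalSpace C(K, Bool) := coverTopology P
  intro G hG
  obtain ⟨T, hTopen, hTct, rfl⟩ := hG
  have basis := TopologicalSpace.isTopologicalBasis_of_subbasis
    (s := {S | ∃ f : C(K, Bool), ∃ L ∈ P, S = {g : C(K, Bool) | ∀ x ∈ L, g x = f x}}) rfl
  rw [isOpen_iff_forall_mem_open]
  intro g hg
  -- For each t ∈ T, find a countable Q ⊆ P with N(g, ⋃₀ Q) ⊆ t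
  have key : ∀ t : Set C(K, Bool), ∃ Q : Set (Set K), t ∈ T →
      Q ⊆ P ∧ Q.Countable ∧ {h : C(K, Bool) | ∀ x ∈ ⋃₀ Q, h x = g x} ⊆ t := by
    intro t
    by_cases ht : t ∈ T
    · obtain ⟨v, ⟨F, ⟨hFfin, hFsub⟩, rfl⟩, hgv, hvt⟩ :=
        basis.exists_subset_of_mem_open (hg t ht) (hTopen t ht)
      have hchoice : ∀ S : Set C(K, Bool), ∃ L : Set K, S ∈ F →
          L ∈ P ∧ {h : C(K, Bool) | ∀ x ∈ L, h x = g x} ⊆ S := by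
        intro S
        by_cases hS : S ∈ F
        · obtain ⟨f, L, hLP, rfl⟩ := hFsub hS
          refine ⟨L, fun _ => ⟨hLP, ?_⟩⟩
          intro h hh x hx
          exact (hh x hx).trans (hgv _ hS x hx)
        · exact ⟨∅, fun h => absurd h hS⟩
      choose Lf hLf using hchoice
      refine ⟨Lf '' F, fun _ => ⟨?_, ?_, ?_⟩⟩
      · rintro _ ⟨S, hS, rfl⟩; exact (hLf S hS).1
      · exact (hFfin.image _).countable
      · intro h hh
        refine hvt (fun S hS => (hLf S hS).2 (fun x hx => hh x ⟨Lf S, ⟨S, hS, rfl⟩, hx⟩))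
    · exact ⟨∅, fun h => absurd h ht⟩
  choose Qf hQf using key
  set Qall : Set (Set K) := ⋃ t ∈ T, Qf t with hQall
  have hQallP : Qall ⊆ P := by
    rintro L hL
    simp only [hQall, Set.mem_iUnion] at hL
    obtain ⟨t, ht, hLt⟩ := hL
    exact (hQf t ht).1 hLt
  have hQallct : Qall.Countable :=
    hTct.biUnion (fun t ht => (hQf t ht).2.1)
  obtain ⟨L, hLP, hLsub⟩ := hctble Qall hQallP hQallct
  refine ⟨{h : C(K, Bool) | ∀ x ∈ L, h x = g x}, ?_, ?_, fun _ _ => rfl⟩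
  · intro h hh
    intro t ht
    refine (hQf t ht).2.2 (fun x hx => hh x ?_)
    exact hLsub (Set.mem_sUnion.2 ⟨_, Set.mem_biUnion ht (Set.mem_sUnion.1 hx).choose_spec.1, (Set.mem_sUnion.1 hx).choose_spec.2⟩)
  · exact TopologicalSpace.isOpen_generateFrom_of_mem ⟨g, L, hLP, rfl⟩
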